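/- arXiv:1209.5903 — 2 statements merged into one kernel-verified Lean document; each statement's English description precedes it below -/
import Mathlib

section
/- Let (X,f) be an (F,B)-dialgebra, and suppose the wide pushout (Q,q) of the cone of all quotients (surjective homomorphisms up to isomorphism) of (X,f) exists in Dialg(F,B), with diagonal z : (X,f) → (Q,q). Then for all x,y ∈ X, x is bisimilar to y (i.e., identified by some dialgebra homomorphism out of (X,f)) if and only if z(x) = z(y). Consequently bisimilarity on (X,f) is an equivalence relation. -/
open CategoryTheory

universe u

/-- An (F,B)-dialgebra: a set together with a map `F X → B X`. -/
structure Dialgebra (F B : Type u ⥤ Type u) where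
  carrier : Type u
  str : F.obj carrier → B.obj carrier

/-- A dialgebra homomorphism: `g ∘ F h = B h ∘ f`. -/
def IsDialgHom {F B : Type u ⥤ Type u} (X Y : Dialgebra F B)
    (h : X.carrier → Y.carrier) : Prop :=
  Y.str ∘ ⇑(F.map (TypeCat.ofHom h)) = ⇑(B.map (TypeCat.ofHom h)) ∘ X.str

/-- Bisimilarity in a dialgebra: identification by some homomorphism. -/
def DialgBisim {F B : Type u ⥤ Type u} (X : Dialgebra F B)
    (x y : X.carrier) : Prop :=
  ∃ (Y : Dialgebra F B) (h : X.carrier → Y.carrier), IsDialgHom X Y h ∧ h x = h y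

/-- Suppose `(Q,q)` is the wide pushout of the cone of quotients of `(X,f)`, with
diagonal `z` (so `z` is a homomorphism, and every surjective homomorphism out of
`(X,f)` admits a leg into `(Q,q)` commuting with `z`), and assume `Dialg(F,B)` has
epi-mono factorisations.  Then `x` is bisimilar to `y` iff `z x = z y`, so
bisimilarity is an equivalence relation. -/
theorem bisimilarity_quotient_characterises_bisimilarity
    (F B : Type u ⥤ Type u) (X Q : Dialgebra F B) (z : X.carrier → Q.carrier)
    (hz : IsDialgHom X Q z)
    (hfac : ∀ (Y : Dialgebra F B) (h : X.carrier → Y.carrier), IsDialgHom X Y h →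
      ∃ (X' : Dialgebra F B) (e : X.carrier → X'.carrier) (m : X'.carrier → Y.carrier),
        IsDialgHom X X' e ∧ IsDialgHom X' Y m ∧
        Function.Surjective e ∧ Function.Injective m ∧ m ∘ e = h)
    (hcocone : ∀ (Y : Dialgebra F B) (h : X.carrier → Y.carrier),
      IsDialgHom X Y h → Function.Surjective h →
      ∃ w : Y.carrier → Q.carrier, IsDialgHom Y Q w ∧ w ∘ h = z) :
    (∀ x y : X.carrier, DialgBisim X x y ↔ z x = z y) ∧
    Equivalence (DialgBisim X) := by
  have key : ∀ x y : X.carrier, DialgBisim X x y ↔ z x = z y := by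
    intro x y
    constructor
    · rintro ⟨Y, h, hhom, hxy⟩
      obtain ⟨X', e, m, he, hm, hesurj, hminj, hme⟩ := hfac Y h hhom
      obtain ⟨w, hw, hwz⟩ := hcocone X' e he hesurj
      have hexy : e x = e y := hminj (by
        have h1 := congrFun hme x
        have h2 := congrFun hme y
        simp only [Function.comp_apply] at h1 h2
        rw [h1, h2, hxy])
      calc z x = w (e x) := (congrFun hwz x).symm
        _ = w (e y) := by rw [hexy]
        _ = z y := congrFun hwz y
    · intro hxy
      exact ⟨Q, z, hz, hxy⟩
  refine ⟨key, ?_, ?_, ?_⟩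
  · intro x; exact (key x x).mpr rfl
  · intro x y hxy; exact (key y x).mpr ((key x y).mp hxy).symm
  · intro x y w hxy hyw
    exact (key x w).mpr (((key x y).mp hxy).trans ((key y w).mp hyw))
end

section
/- The functor F(X) = X + (X × X) on Set preserves wide pushouts of epimorphisms, and both F and B(X) = P(X) (powerset) preserve monomorphisms with empty domain. Hence Dialg(F,B) has epi-mono factorisations and every (F,B)-dialgebra has a bisimilarity quotient. -/
open CategoryTheory

universe u

/-- The interaction functor `F(X) = X + X × X`. -/
def InteractionF : Type u ⥤ Type u where
  obj X := X ⊕ X × X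
  map h := TypeCat.ofHom (Sum.map h (Prod.map h h))
  map_id := by intro X; ext x; cases x <;> rfl
  map_comp := by intro X Y Z f g; ext x; cases x <;> rfl

/-- The observation functor `B(X) = P(X)` (powerset). -/
def ObservationB : Type u ⥤ Type u where
  obj X := Set X
  map h := TypeCat.ofHom (Set.image h)
  map_id := by intro X; ext s; simp
  map_comp := by intro X Y Z f g; ext s; exact Set.ext_iff.mp (Set.image_comp g f s) _

/-- Quotients of a dialgebra, as in the definition of the bisimilarity quotient. -/
def QuotObj {F B : Type u ⥤ Type u} (X : Dialgebra F B) : Type u :=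
  Σ s : Setoid X.carrier,
    { g : F.obj (_root_.Quotient s) → B.obj (_root_.Quotient s) //
      IsDialgHom X ⟨_root_.Quotient s, g⟩ (Quotient.mk s) }

theorem Fmap_surj {A B : Type u} {g : A → B} (hg : Function.Surjective g) :
    Function.Surjective (⇑(InteractionF.map (TypeCat.ofHom g))) := by
  intro x
  cases x with
  | inl b => obtain ⟨a, rfl⟩ := hg b; exact ⟨Sum.inl a, rfl⟩
  | inr p =>
    obtain ⟨a, ha⟩ := hg p.1
    obtain ⟨b, hb⟩ := hg p.2
    exact ⟨Sum.inr (a, b), by show Sum.inr (g a, g b) = Sum.inr p; rw [ha, hb]⟩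

theorem wide_pushout_preserved (X₀ I : Type u) (Y : I → Type u) (h : ∀ i, X₀ → Y i)
    (hs : ∀ i, Function.Surjective (h i))
    (u : ∀ i, Y i → Quot (fun a b : X₀ => ∃ i, h i a = h i b))
    (hu : ∀ i, u i ∘ h i = Quot.mk _)
    (W : Type u) (k₀ : InteractionF.obj X₀ → W)
    (k : ∀ i, InteractionF.obj (Y i) → W)
    (hk : ∀ i, k i ∘ ⇑(InteractionF.map (TypeCat.ofHom (h i))) = k₀) :
    ∃! v : InteractionF.obj (Quot (fun a b : X₀ => ∃ i, h i a = h i b)) → W,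
      v ∘ ⇑(InteractionF.map (TypeCat.ofHom (Quot.mk _))) = k₀ ∧
      ∀ i, v ∘ ⇑(InteractionF.map (TypeCat.ofHom (u i))) = k i := by
  let R := fun a b : X₀ => ∃ i, h i a = h i b
  have hk1 : ∀ i a, k i (Sum.inl (h i a)) = k₀ (Sum.inl a) := fun i a =>
    congrFun (hk i) (Sum.inl a)
  have hk2 : ∀ i a b, k i (Sum.inr (h i a, h i b)) = k₀ (Sum.inr (a, b)) := fun i a b =>
    congrFun (hk i) (Sum.inr (a, b))
  have resp1 : ∀ a b, R a b → k₀ (Sum.inl a) = k₀ (Sum.inl b) := by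
    rintro a b ⟨i, e⟩
    rw [← hk1 i a, e, hk1]
  have resp2 : ∀ a b b', R b b' → k₀ (Sum.inr (a, b)) = k₀ (Sum.inr (a, b')) := by
    rintro a b b' ⟨i, e⟩
    rw [← hk2 i a b, e, hk2]
  have resp2' : ∀ a a' b, R a a' → k₀ (Sum.inr (a, b)) = k₀ (Sum.inr (a', b)) := by
    rintro a a' b ⟨i, e⟩
    rw [← hk2 i a b, e, hk2]
  have f2resp : ∀ a a', R a a' →
      (Quot.lift (fun b => k₀ (Sum.inr (a, b))) (fun b b' hb => resp2 a b b' hb)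
        : Quot R → W) =
      Quot.lift (fun b => k₀ (Sum.inr (a', b))) (fun b b' hb => resp2 a' b b' hb) := by
    intro a a' ha
    funext q
    induction q using Quot.ind with
    | mk b => exact resp2' a a' b ha
  let v : Quot R ⊕ Quot R × Quot R → W := fun x =>
    match x with
    | Sum.inl q => Quot.lift (fun a => k₀ (Sum.inl a)) resp1 q
    | Sum.inr (q1, q2) =>
        Quot.lift (fun a => Quot.lift (fun b => k₀ (Sum.inr (a, b)))
          (fun b b' hb => resp2 a b b' hb)) f2resp q1 q2
  have hsurj : Function.Surjective (Quot.mk R) := fun q => Quot.inductionOn q fun a => ⟨a, rfl⟩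
  have hv1 : v ∘ ⇑(InteractionF.map (TypeCat.ofHom (Quot.mk R))) = k₀ := by
    funext x
    rcases x with a | ⟨a, b⟩ <;> rfl
  refine ⟨v, ⟨hv1, ?_⟩, ?_⟩
  · intro i
    funext y
    rcases y with y0 | ⟨y1, y2⟩
    · obtain ⟨a, rfl⟩ := hs i y0
      show v (Sum.inl (u i (h i a))) = k i (Sum.inl (h i a))
      rw [show u i (h i a) = Quot.mk R a from congrFun (hu i) a]
      exact (hk1 i a).symm
    · obtain ⟨a, rfl⟩ := hs i y1
      obtain ⟨b, rfl⟩ := hs i y2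
      show v (Sum.inr (u i (h i a), u i (h i b))) = k i (Sum.inr (h i a, h i b))
      rw [show u i (h i a) = Quot.mk R a from congrFun (hu i) a,
        show u i (h i b) = Quot.mk R b from congrFun (hu i) b]
      exact (hk2 i a b).symm
  · rintro v' ⟨hv1', _⟩
    funext x
    obtain ⟨w, rfl⟩ := Fmap_surj hsurj x
    exact (congrFun hv1' w).trans (congrFun hv1 w).symm

theorem Fmap_comp_apply {A B C : Type u} (f : A → B) (g : B → C)
    (x : InteractionF.obj A) :
    ⇑(InteractionF.map (TypeCat.ofHom g)) (⇑(InteractionF.map (TypeCat.ofHom f)) x) = ⇑(InteractionF.map (TypeCat.ofHom (g ∘ f))) x := by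
  rcases x with a | ⟨a, b⟩ <;> rfl

theorem Bmap_comp_apply {A B C : Type u} (f : A → B) (g : B → C)
    (s : ObservationB.obj A) :
    ⇑(ObservationB.map (TypeCat.ofHom g)) (⇑(ObservationB.map (TypeCat.ofHom f)) s) = ⇑(ObservationB.map (TypeCat.ofHom (g ∘ f))) s :=
  (Set.image_comp g f s).symm

theorem factorisation (X Y : Dialgebra InteractionF.{u} ObservationB.{u})
    (h : X.carrier → Y.carrier) (hh : IsDialgHom X Y h) :
    ∃ (X' : Dialgebra InteractionF.{u} ObservationB.{u})
      (e : X.carrier → X'.carrier) (m : X'.carrier → Y.carrier),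
      IsDialgHom X X' e ∧ IsDialgHom X' Y m ∧
      Function.Surjective e ∧ Function.Injective m ∧ m ∘ e = h := by
  classical
  let e : X.carrier → ↥(Set.range h) := fun x => ⟨h x, ⟨x, rfl⟩⟩
  let m : ↥(Set.range h) → Y.carrier := Subtype.val
  have hme : m ∘ e = h := rfl
  have he : Function.Surjective e := by
    rintro ⟨y, x, rfl⟩; exact ⟨x, rfl⟩
  have hm : Function.Injective m := Subtype.val_injective
  have hFe : Function.Surjective (⇑(InteractionF.map (TypeCat.ofHom e))) := Fmap_surj he
  have hBm : Function.Injective (⇑(ObservationB.map (TypeCat.ofHom m))) := Set.image_injective.2 hm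
  have key : ∀ w w', ⇑(InteractionF.map (TypeCat.ofHom e)) w = ⇑(InteractionF.map (TypeCat.ofHom e)) w' →
      ⇑(ObservationB.map (TypeCat.ofHom e)) (X.str w) = ⇑(ObservationB.map (TypeCat.ofHom e)) (X.str w') := by
    intro w w' hw
    apply hBm
    rw [Bmap_comp_apply, Bmap_comp_apply, hme]
    have h1 := congrFun hh w
    have h2 := congrFun hh w'
    simp only [Function.comp] at h1 h2
    rw [← h1, ← h2]
    congr 1
    rw [← hme, ← Fmap_comp_apply e m w, ← Fmap_comp_apply e m w', hw]
  let g' : InteractionF.obj ↥(Set.range h) → ObservationB.obj ↥(Set.range h) :=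
    fun z => ⇑(ObservationB.map (TypeCat.ofHom e)) (X.str (Function.surjInv hFe z))
  have hge : ∀ w, g' (⇑(InteractionF.map (TypeCat.ofHom e)) w) = ⇑(ObservationB.map (TypeCat.ofHom e)) (X.str w) := fun w =>
    key _ _ (Function.surjInv_eq hFe (⇑(InteractionF.map (TypeCat.ofHom e)) w))
  refine ⟨⟨↥(Set.range h), g'⟩, e, m, funext hge, ?_, he, hm, hme⟩
  funext z
  obtain ⟨w, rfl⟩ := hFe z
  show Y.str (⇑(InteractionF.map (TypeCat.ofHom m)) (⇑(InteractionF.map (TypeCat.ofHom e)) w)) = ⇑(ObservationB.map (TypeCat.ofHom m)) (g' (⇑(InteractionF.map (TypeCat.ofHom e)) w))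
  rw [hge w, Fmap_comp_apply e m w, Bmap_comp_apply e m (X.str w), hme]
  exact congrFun hh w

theorem bisim_quotient (X : Dialgebra InteractionF.{u} ObservationB.{u}) :
    ∃ (Q : Dialgebra InteractionF.{u} ObservationB.{u})
      (z : X.carrier → Q.carrier)
      (leg : ∀ p : QuotObj X, _root_.Quotient p.1 → Q.carrier),
      IsDialgHom X Q z ∧
      (∀ p : QuotObj X,
        IsDialgHom ⟨_root_.Quotient p.1, p.2.1⟩ Q (leg p) ∧
        leg p ∘ Quotient.mk p.1 = z) ∧
      (∀ (W : Dialgebra InteractionF.{u} ObservationB.{u})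
         (w : X.carrier → W.carrier)
         (wleg : ∀ p : QuotObj X, _root_.Quotient p.1 → W.carrier),
        IsDialgHom X W w →
        (∀ p : QuotObj X,
          IsDialgHom ⟨_root_.Quotient p.1, p.2.1⟩ W (wleg p) ∧
          wleg p ∘ Quotient.mk p.1 = w) →
        ∃! v : Q.carrier → W.carrier,
          IsDialgHom Q W v ∧ v ∘ z = w ∧ ∀ p, v ∘ leg p = wleg p) := by
  classical
  let hq : ∀ p : QuotObj X, X.carrier → _root_.Quotient p.1 := fun p => Quotient.mk p.1
  let Qc := Quot (fun a b : X.carrier => ∃ p, hq p a = hq p b)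
  let z : X.carrier → Qc := Quot.mk _
  have hzsurj : Function.Surjective z := fun q => Quot.inductionOn q fun a => ⟨a, rfl⟩
  let leg : ∀ p : QuotObj X, _root_.Quotient p.1 → Qc := fun p =>
    Quotient.lift z (fun a b hab => Quot.sound ⟨p, Quotient.sound hab⟩)
  have hleg : ∀ p, leg p ∘ Quotient.mk p.1 = z := fun p => rfl
  have hqsurj : ∀ p, Function.Surjective (hq p) := fun p q =>
    Quotient.inductionOn q fun a => ⟨a, rfl⟩
  -- the cocone on B Qc
  obtain ⟨g, ⟨hg1, hg2⟩, -⟩ :=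
    wide_pushout_preserved X.carrier (QuotObj X) (fun p => _root_.Quotient p.1) hq hqsurj
      leg hleg (ObservationB.obj Qc)
      (⇑(ObservationB.map (TypeCat.ofHom z)) ∘ X.str)
      (fun p => ⇑(ObservationB.map (TypeCat.ofHom (leg p))) ∘ p.2.1)
      (by
        intro p
        funext x
        show ⇑(ObservationB.map (TypeCat.ofHom (leg p))) (p.2.1 (⇑(InteractionF.map (TypeCat.ofHom (hq p))) x)) =
          ⇑(ObservationB.map (TypeCat.ofHom z)) (X.str x)
        have e1 : p.2.1 (⇑(InteractionF.map (TypeCat.ofHom (hq p))) x) =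
            ⇑(ObservationB.map (TypeCat.ofHom (hq p))) (X.str x) := congrFun p.2.2 x
        rw [e1, Bmap_comp_apply, hleg p])
  refine ⟨⟨Qc, g⟩, z, leg, hg1, fun p => ⟨hg2 p, hleg p⟩, ?_⟩
  intro W w wleg hw hwleg
  have resp : ∀ a b : X.carrier, (∃ p, hq p a = hq p b) → w a = w b := by
    rintro a b ⟨p, e⟩
    calc w a = wleg p (hq p a) := (congrFun (hwleg p).2 a).symm
    _ = wleg p (hq p b) := by rw [e]
    _ = w b := congrFun (hwleg p).2 b
  let v : Qc → W.carrier := Quot.lift w resp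
  have hvz : v ∘ z = w := rfl
  have hvleg : ∀ p, v ∘ leg p = wleg p := by
    intro p
    funext q
    induction q using Quotient.ind with
    | _ a => exact (congrFun (hwleg p).2 a).symm
  have hvhom : IsDialgHom ⟨Qc, g⟩ W v := by
    funext x
    obtain ⟨y, rfl⟩ := Fmap_surj hzsurj x
    show W.str (⇑(InteractionF.map (TypeCat.ofHom v)) (⇑(InteractionF.map (TypeCat.ofHom z)) y)) =
      ⇑(ObservationB.map (TypeCat.ofHom v)) (g (⇑(InteractionF.map (TypeCat.ofHom z)) y))
    have e1 : g (⇑(InteractionF.map (TypeCat.ofHom z)) y) = ⇑(ObservationB.map (TypeCat.ofHom z)) (X.str y) := congrFun hg1 y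
    rw [Fmap_comp_apply z v y, hvz, e1, Bmap_comp_apply z v (X.str y), hvz]
    exact congrFun hw y
  refine ⟨v, ⟨hvhom, hvz, hvleg⟩, ?_⟩
  rintro v' ⟨-, hv'z, -⟩
  funext q
  induction q using Quot.ind with
  | mk a => exact (congrFun hv'z a).trans (congrFun hvz a).symm

/-- `F(X) = X + X × X` preserves wide pushouts of epimorphisms, and both `F` and
`B(X) = P(X)` preserve monomorphisms with empty domain; hence `Dialg(F,B)` has
epi-mono factorisations and every `(F,B)`-dialgebra has a bisimilarity
quotient. -/
theorem interaction_observation_properties :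
    -- F preserves wide (small) pushouts of epimorphisms
    (∀ (X₀ I : Type u) (Y : I → Type u) (h : ∀ i, X₀ → Y i),
      (∀ i, Function.Surjective (h i)) →
      ∀ u : ∀ i, Y i → Quot (fun a b : X₀ => ∃ i, h i a = h i b),
        (∀ i, u i ∘ h i = Quot.mk _) →
        ∀ (W : Type u) (k₀ : InteractionF.obj X₀ → W)
          (k : ∀ i, InteractionF.obj (Y i) → W),
          (∀ i, k i ∘ ⇑(InteractionF.map (TypeCat.ofHom (h i))) = k₀) →
          ∃! v : InteractionF.obj (Quot (fun a b : X₀ => ∃ i, h i a = h i b)) → W,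
            v ∘ ⇑(InteractionF.map (TypeCat.ofHom (Quot.mk _))) = k₀ ∧
            ∀ i, v ∘ ⇑(InteractionF.map (TypeCat.ofHom (u i))) = k i) ∧
    -- F and B preserve monos with empty domain
    (∀ (A C : Type u) (g : A → C), IsEmpty A → Function.Injective g →
      Function.Injective ⇑(InteractionF.map (TypeCat.ofHom g))) ∧
    (∀ (A C : Type u) (g : A → C), IsEmpty A → Function.Injective g →
      Function.Injective ⇑(ObservationB.map (TypeCat.ofHom g))) ∧
    -- hence: epi-mono factorisations in Dialg(F,B)
    (∀ (X Y : Dialgebra InteractionF.{u} ObservationB.{u})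
       (h : X.carrier → Y.carrier), IsDialgHom X Y h →
      ∃ (X' : Dialgebra InteractionF.{u} ObservationB.{u})
        (e : X.carrier → X'.carrier) (m : X'.carrier → Y.carrier),
        IsDialgHom X X' e ∧ IsDialgHom X' Y m ∧
        Function.Surjective e ∧ Function.Injective m ∧ m ∘ e = h) ∧
    -- and: every (F,B)-dialgebra has a bisimilarity quotient
    (∀ X : Dialgebra InteractionF.{u} ObservationB.{u},
      ∃ (Q : Dialgebra InteractionF.{u} ObservationB.{u})
        (z : X.carrier → Q.carrier)
        (leg : ∀ p : QuotObj X, _root_.Quotient p.1 → Q.carrier),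
        IsDialgHom X Q z ∧
        (∀ p : QuotObj X,
          IsDialgHom ⟨_root_.Quotient p.1, p.2.1⟩ Q (leg p) ∧
          leg p ∘ Quotient.mk p.1 = z) ∧
        (∀ (W : Dialgebra InteractionF.{u} ObservationB.{u})
           (w : X.carrier → W.carrier)
           (wleg : ∀ p : QuotObj X, _root_.Quotient p.1 → W.carrier),
          IsDialgHom X W w →
          (∀ p : QuotObj X,
            IsDialgHom ⟨_root_.Quotient p.1, p.2.1⟩ W (wleg p) ∧
            wleg p ∘ Quotient.mk p.1 = w) →
          ∃! v : Q.carrier → W.carrier,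
            IsDialgHom Q W v ∧ v ∘ z = w ∧ ∀ p, v ∘ leg p = wleg p)) := by
  refine ⟨wide_pushout_preserved, ?_, ?_, factorisation, bisim_quotient⟩
  · intro A C g hA _ x y _
    exfalso
    rcases x with a | ⟨a, b⟩
    · exact hA.false a
    · exact hA.false a
  · intro A C g hA _ s t _
    funext a
    exact (hA.false a).elim
end
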